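/- For any graph H with vertex set {1,2,...,k} and any δ > 0, there exist a positive constant ε and an integer n_0 such that the following holds. Let n ≥ n_0 and let G be a graph whose vertex set is a disjoint union V_1 ∪ V_2 ∪ ... ∪ V_k of sets of size n. Assume that for each edge ij of H, the bipartite subgraph of G induced between V_i and V_j is ε-regular with density d_{ij}. Then the number G(H) of canonical copies of H in G satisfies |G(H) - (∏_{ij ∈ E(H)} d_{ij})·n^k| ≤ δ·n^k. -/

import Mathlib

open Finset
open scoped Classical

noncomputable def eBetween {α : Type*} [Fintype α] (G : SimpleGraph α) (U W : Finset α) : ℕ :=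
  ((U ×ˢ W).filter fun q => G.Adj q.1 q.2).card

noncomputable def dens {α : Type*} [Fintype α] (G : SimpleGraph α) (U W : Finset α) : ℝ :=
  (eBetween G U W : ℝ) / ((U.card : ℝ) * (W.card : ℝ))

/-- The pair `(U, W)` is `ε`-regular in `G`. -/
def RegularPair {α : Type*} [Fintype α] (G : SimpleGraph α) (ε : ℝ) (U W : Finset α) : Prop :=
  ∀ U' ⊆ U, ∀ W' ⊆ W, ε * (U.card : ℝ) ≤ (U'.card : ℝ) → ε * (W.card : ℝ) ≤ (W'.card : ℝ) →
    |dens G U' W' - dens G U W| ≤ ε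

/-- The `i`-th part `V_i = {i} × Fin n` of the vertex set `Fin k × Fin n`. -/
def part (k n : ℕ) (i : Fin k) : Finset (Fin k × Fin n) :=
  Finset.univ.filter fun v => v.1 = i

/-- The number of canonical copies of `H` in `G`: tuples `(v_1, …, v_k)` with `v_i ∈ V_i`
and `v_i v_j` adjacent in `G` for every edge `ij` of `H`. -/
noncomputable def canonCount {k n : ℕ} (H : SimpleGraph (Fin k))
    (G : SimpleGraph (Fin k × Fin n)) : ℕ :=
  (Finset.univ.filter fun f : Fin k → Fin n =>
    ∀ i j, H.Adj i j → G.Adj (i, f i) (j, f j)).card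

section helpers
variable {α : Type*} [Fintype α] (G : SimpleGraph α)

lemma eBetween_le (U W : Finset α) : eBetween G U W ≤ U.card * W.card := by
  classical
  calc ((U ×ˢ W).filter fun q => G.Adj q.1 q.2).card ≤ (U ×ˢ W).card :=
        Finset.card_filter_le _ _
    _ = U.card * W.card := Finset.card_product U W

lemma dens_nonneg (U W : Finset α) : 0 ≤ dens G U W := by
  unfold _root_.dens; positivity

lemma dens_le_one (U W : Finset α) : dens G U W ≤ 1 := by
  unfold _root_.dens
  rcases eq_or_lt_of_le (show (0:ℝ) ≤ (U.card : ℝ) * (W.card : ℝ) by positivity) with h | h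
  · rw [← h, div_zero]; exact zero_le_one
  · rw [div_le_one h]
    exact_mod_cast eBetween_le G U W

/-- The uniform count bound that follows from regularity. -/
lemma count_bound {ε : ℝ} (hε : 0 < ε) {U W : Finset α} (hreg : RegularPair G ε U W)
    {A B : Finset α} (hA : A ⊆ U) (hB : B ⊆ W) :
    |(eBetween G A B : ℝ) - dens G U W * A.card * B.card| ≤
      ε * ((U.card : ℝ) * (W.card : ℝ)) := by
  have hd0 : 0 ≤ dens G U W := dens_nonneg G U W
  have hd1 : dens G U W ≤ 1 := dens_le_one G U W
  have hAU : (A.card : ℝ) ≤ U.card := by exact_mod_cast Finset.card_le_card hA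
  have hBW : (B.card : ℝ) ≤ W.card := by exact_mod_cast Finset.card_le_card hB
  have hA0 : (0:ℝ) ≤ A.card := by positivity
  have hB0 : (0:ℝ) ≤ B.card := by positivity
  have hU0 : (0:ℝ) ≤ U.card := by positivity
  have hW0 : (0:ℝ) ≤ W.card := by positivity
  have heAB : (eBetween G A B : ℝ) ≤ (A.card : ℝ) * B.card := by
    exact_mod_cast eBetween_le G A B
  have he0 : (0:ℝ) ≤ (eBetween G A B : ℝ) := Nat.cast_nonneg _
  rcases Finset.eq_empty_or_nonempty A with rfl | hAne
  · simp only [eBetween, Finset.empty_product, Finset.filter_empty, Finset.card_empty,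
      Finset.card_empty, Nat.cast_zero, mul_zero, zero_mul, sub_zero, abs_zero]
    positivity
  rcases Finset.eq_empty_or_nonempty B with rfl | hBne
  · simp only [eBetween, Finset.product_empty, Finset.filter_empty, Finset.card_empty,
      Nat.cast_zero, mul_zero, sub_zero, abs_zero]
    positivity
  by_cases hA' : (A.card : ℝ) < ε * U.card
  · rw [abs_sub_le_iff]
    constructor <;> nlinarith
  by_cases hB' : (B.card : ℝ) < ε * W.card
  · rw [abs_sub_le_iff]
    constructor <;> nlinarith
  push_neg at hA' hB'
  have hApos : (0:ℝ) < A.card := by exact_mod_cast Finset.card_pos.2 hAne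
  have hBpos : (0:ℝ) < B.card := by exact_mod_cast Finset.card_pos.2 hBne
  have hkey : |dens G A B - dens G U W| ≤ ε := hreg A hA B hB hA' hB'
  have hAB : dens G A B = (eBetween G A B : ℝ) / ((A.card : ℝ) * B.card) := rfl
  have hne : ((A.card : ℝ) * B.card) ≠ 0 := by positivity
  have : |(eBetween G A B : ℝ) - dens G U W * A.card * B.card|
      = |dens G A B - dens G U W| * ((A.card : ℝ) * B.card) := by
    rw [← abs_of_pos (show (0:ℝ) < (A.card:ℝ)*B.card by positivity), ← abs_mul]
    congr 1
    rw [hAB, sub_mul, div_mul_cancel₀ _ hne]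
    ring
  rw [this]
  calc |dens G A B - dens G U W| * ((A.card : ℝ) * B.card)
      ≤ ε * ((A.card : ℝ) * B.card) := by
        apply mul_le_mul_of_nonneg_right hkey (by positivity)
    _ ≤ ε * ((U.card : ℝ) * W.card) := by
        apply mul_le_mul_of_nonneg_left _ hε.le
        apply mul_le_mul hAU hBW hB0 hU0
end helpers
section core
variable {k n : ℕ}

/-- Edge indicator weight. -/
noncomputable def w (G : SimpleGraph (Fin k × Fin n)) (q : Fin k × Fin k)
    (f : Fin k → Fin n) : ℝ :=
  if G.Adj (q.1, f q.1) (q.2, f q.2) then 1 else 0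

lemma w_mem (G : SimpleGraph (Fin k × Fin n)) (q : Fin k × Fin k) (f : Fin k → Fin n) :
    w G q f = 0 ∨ w G q f = 1 := by
  unfold w; split_ifs <;> simp

lemma prod01 {β : Type*} (s : Finset β) (u : β → ℝ) (h : ∀ x ∈ s, u x = 0 ∨ u x = 1) :
    (∏ x ∈ s, u x) = 0 ∨ (∏ x ∈ s, u x) = 1 := by
  classical
  induction s using Finset.induction_on with
  | empty => right; simp
  | insert a s hx ih =>
    rw [Finset.prod_insert hx]
    rcases h a (Finset.mem_insert_self a s) with h0 | h1
    · left; rw [h0, zero_mul]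
    · rcases ih (fun x hxm => h x (Finset.mem_insert_of_mem hxm)) with h0 | h1'
      · left; rw [h0, mul_zero]
      · right; rw [h1, h1', mul_one]

lemma part_card (i : Fin k) : (part k n i).card = n := by
  classical
  have : part k n i = {i} ×ˢ (Finset.univ : Finset (Fin n)) := by
    ext v
    simp only [part, Finset.mem_filter, Finset.mem_univ, true_and, Finset.mem_product,
      Finset.mem_singleton]
    tauto
  rw [this, Finset.card_product]
  simp

lemma mem_part {i : Fin k} {v : Fin k × Fin n} : v ∈ part k n i ↔ v.1 = i := by
  simp [part]
end core
section recon
variable {k n : ℕ}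

/-- Reconstruct a function from values at `i`, `j` and on the rest. -/
noncomputable def recon (i j : Fin k) (a b : Fin n)
    (g : {l : Fin k // l ≠ i ∧ l ≠ j} → Fin n) : Fin k → Fin n :=
  fun l => if h1 : l = i then a else if h2 : l = j then b else g ⟨l, h1, h2⟩

variable {i j : Fin k}

lemma recon_i (a b : Fin n) (g : {l : Fin k // l ≠ i ∧ l ≠ j} → Fin n) :
    recon i j a b g i = a := by simp [recon]

lemma recon_j (hij : j ≠ i) (a b : Fin n) (g : {l : Fin k // l ≠ i ∧ l ≠ j} → Fin n) :
    recon i j a b g j = b := by simp [recon, hij]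

lemma recon_ne {l : Fin k} (h1 : l ≠ i) (h2 : l ≠ j) (a b : Fin n)
    (g : {l : Fin k // l ≠ i ∧ l ≠ j} → Fin n) :
    recon i j a b g l = g ⟨l, h1, h2⟩ := by simp [recon, h1, h2]

lemma recon_indep_b {l : Fin k} (h2 : l ≠ j) (a b b' : Fin n)
    (g : {l : Fin k // l ≠ i ∧ l ≠ j} → Fin n) :
    recon i j a b g l = recon i j a b' g l := by
  unfold recon
  split_ifs <;> tauto

lemma recon_indep_a {l : Fin k} (h1 : l ≠ i) (a a' b : Fin n)
    (g : {l : Fin k // l ≠ i ∧ l ≠ j} → Fin n) :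
    recon i j a b g l = recon i j a' b g l := by
  unfold recon
  split_ifs <;> tauto

/-- The reindexing equivalence. -/
noncomputable def reconEquiv (i j : Fin k) (hij : j ≠ i) :
    (({l : Fin k // l ≠ i ∧ l ≠ j} → Fin n) × Fin n × Fin n) ≃ (Fin k → Fin n) where
  toFun p := recon i j p.2.1 p.2.2 p.1
  invFun f := (fun l => f l.1, f i, f j)
  left_inv p := by
    obtain ⟨g, a, b⟩ := p
    refine Prod.ext ?_ (Prod.ext ?_ ?_)
    · funext l
      exact (recon_ne l.2.1 l.2.2 a b g).trans (by simp)
    · exact recon_i a b g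
    · exact recon_j hij a b g
  right_inv f := by
    funext l
    show (if h1 : l = i then f i else if h2 : l = j then f j else f l) = f l
    split_ifs with h1 h2
    · rw [h1]
    · rw [h2]
    · rfl

lemma w_congr (G : SimpleGraph (Fin k × Fin n)) (q : Fin k × Fin k)
    {f f' : Fin k → Fin n} (h1 : f q.1 = f' q.1) (h2 : f q.2 = f' q.2) :
    w G q f = w G q f' := by
  unfold w
  rw [h1, h2]

lemma card_rest (hij : i ≠ j) :
    Fintype.card {l : Fin k // l ≠ i ∧ l ≠ j} = k - 2 := by
  classical
  rw [Fintype.card_subtype]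
  have : Finset.univ.filter (fun l : Fin k => l ≠ i ∧ l ≠ j)
      = Finset.univ \ {i, j} := by
    ext l
    simp [Finset.mem_sdiff]
  rw [this, Finset.card_sdiff_of_subset (Finset.subset_univ _)]
  rw [Finset.card_insert_of_notMem (by simpa using hij), Finset.card_singleton]
  simp

end recon
section inner
variable {k n : ℕ}

lemma inner_bound (G : SimpleGraph (Fin k × Fin n)) {ε : ℝ} (hε : 0 < ε)
    {i j : Fin k} (hij : i < j)
    (hreg : RegularPair G ε (part k n i) (part k n j)) (hn : 0 < n)
    (S : Finset (Fin k × Fin k)) (hS : ∀ q' ∈ S, q'.1 < q'.2) (hqS : (i, j) ∉ S)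
    (g : {l : Fin k // l ≠ i ∧ l ≠ j} → Fin n) :
    |∑ a : Fin n, ∑ b : Fin n,
        (w G (i, j) (recon i j a b g) - dens G (part k n i) (part k n j)) *
          ∏ q' ∈ S, w G q' (recon i j a b g)| ≤ ε * ((n : ℝ) * n) := by
  classical
  have hij' : i ≠ j := Fin.ne_of_lt hij
  have hji : j ≠ i := hij'.symm
  set d := dens G (part k n i) (part k n j) with hd
  obtain ⟨b₀⟩ : Nonempty (Fin n) := ⟨⟨0, hn⟩⟩
  -- every edge in S touching i avoids j, and vice versa
  have htouch : ∀ q' ∈ S, (q'.1 = i ∨ q'.2 = i) → q'.1 ≠ j ∧ q'.2 ≠ j := by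
    intro q' hq' h
    have hlt := hS q' hq'
    rcases h with h2 | h2
    · refine ⟨by rw [h2]; exact hij', ?_⟩
      intro hj
      exact hqS ((Prod.ext h2 hj : q' = (i, j)) ▸ hq')
    · constructor
      · intro hj
        rw [hj, h2] at hlt
        exact absurd hlt (not_lt.2 hij.le)
      · rw [h2]; exact hij'
  -- split S into the edges touching i, touching j, and the rest
  set Pi : Fin k × Fin k → Prop := fun q' => q'.1 = i ∨ q'.2 = i with hPidef
  set Pj : Fin k × Fin k → Prop := fun q' => q'.1 = j ∨ q'.2 = j with hPjdef
  classical
  set Si := S.filter Pi with hSi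
  set Sj := (S.filter fun q' => ¬ Pi q').filter Pj with hSj
  set S0 := (S.filter fun q' => ¬ Pi q').filter (fun q' => ¬ Pj q') with hS0
  set Gi : Fin n → ℝ := fun a => ∏ q' ∈ Si, w G q' (recon i j a b₀ g) with hGidef
  set Gj : Fin n → ℝ := fun b => ∏ q' ∈ Sj, w G q' (recon i j b₀ b g) with hGjdef
  set c : ℝ := ∏ q' ∈ S0, w G q' (recon i j b₀ b₀ g) with hcdef
  have hprod : ∀ a b, (∏ q' ∈ S, w G q' (recon i j a b g)) = Gi a * Gj b * c := by
    intro a b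
    rw [← Finset.prod_filter_mul_prod_filter_not S Pi,
      ← Finset.prod_filter_mul_prod_filter_not (S.filter fun q' => ¬ Pi q') Pj,
      ← mul_assoc]
    congr 1
    · congr 1
      · apply Finset.prod_congr rfl
        intro q' hq'
        rw [Finset.mem_filter] at hq'
        obtain ⟨h1, h2⟩ := htouch q' hq'.1 hq'.2
        exact w_congr G q' (recon_indep_b h1 a b b₀ g) (recon_indep_b h2 a b b₀ g)
      · apply Finset.prod_congr rfl
        intro q' hq'
        rw [Finset.mem_filter, Finset.mem_filter] at hq'
        have hni : q'.1 ≠ i ∧ q'.2 ≠ i := by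
          have h := hq'.1.2
          simp only [hPidef, not_or] at h
          exact h
        exact w_congr G q' (recon_indep_a hni.1 a b₀ b g) (recon_indep_a hni.2 a b₀ b g)
    · apply Finset.prod_congr rfl
      intro q' hq'
      rw [Finset.mem_filter, Finset.mem_filter] at hq'
      have hni : q'.1 ≠ i ∧ q'.2 ≠ i := by
        have h := hq'.1.2
        simp only [hPidef, not_or] at h
        exact h
      have hnj : q'.1 ≠ j ∧ q'.2 ≠ j := by
        have h := hq'.2
        simp only [hPjdef, not_or] at h
        exact h
      refine w_congr G q' ?_ ?_
      · rw [recon_ne hni.1 hnj.1, recon_ne hni.1 hnj.1]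
      · rw [recon_ne hni.2 hnj.2, recon_ne hni.2 hnj.2]
  have hGi01 : ∀ a, Gi a = 0 ∨ Gi a = 1 := fun a =>
    prod01 _ _ (fun x _ => w_mem G x _)
  have hGj01 : ∀ b, Gj b = 0 ∨ Gj b = 1 := fun b =>
    prod01 _ _ (fun x _ => w_mem G x _)
  have hc01 : c = 0 ∨ c = 1 := prod01 _ _ (fun x _ => w_mem G x _)
  set A : Finset (Fin n) := Finset.univ.filter (fun a => Gi a = 1) with hA
  set B : Finset (Fin n) := Finset.univ.filter (fun b => Gj b = 1) with hB
  set χ : Fin n → Fin n → ℝ := fun a b => if G.Adj (i, a) (j, b) then 1 else 0 with hχ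
  have hw : ∀ a b, w G (i, j) (recon i j a b g) = χ a b := by
    intro a b
    unfold w
    rw [show ((i,j).1 : Fin k) = i from rfl, show ((i,j).2 : Fin k) = j from rfl,
      recon_i, recon_j hji]
  -- rewrite the double sum
  have hterm : ∀ a b, (w G (i, j) (recon i j a b g) - d) * ∏ q' ∈ S, w G q' (recon i j a b g)
      = c * (if Gi a = 1 then (if Gj b = 1 then χ a b - d else 0) else 0) := by
    intro a b
    rw [hw, hprod]
    rcases hGi01 a with h | h <;> rcases hGj01 b with h' | h' <;>
      rw [h, h'] <;> norm_num <;> ring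
  have inner1 : ∀ a : Fin n, (∑ b : Fin n,
      (w G (i, j) (recon i j a b g) - d) * ∏ q' ∈ S, w G q' (recon i j a b g))
      = c * (if Gi a = 1 then (∑ b ∈ B, (χ a b - d)) else 0) := by
    intro a
    calc (∑ b : Fin n,
        (w G (i, j) (recon i j a b g) - d) * ∏ q' ∈ S, w G q' (recon i j a b g))
        = ∑ b : Fin n, c * (if Gi a = 1 then (if Gj b = 1 then χ a b - d else 0) else 0) :=
          Finset.sum_congr rfl (fun b _ => hterm a b)
      _ = c * ∑ b : Fin n, (if Gi a = 1 then (if Gj b = 1 then χ a b - d else 0) else 0) :=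
          (Finset.mul_sum _ _ _).symm
      _ = c * (if Gi a = 1 then (∑ b ∈ B, (χ a b - d)) else 0) := by
          by_cases h : Gi a = 1
          · simp only [h, if_true]
            congr 1
            rw [hB, Finset.sum_filter]
          · simp [h]
  have hsum1 : (∑ a : Fin n, ∑ b : Fin n,
      (w G (i, j) (recon i j a b g) - d) * ∏ q' ∈ S, w G q' (recon i j a b g))
      = c * ((∑ a ∈ A, ∑ b ∈ B, χ a b) - d * A.card * B.card) := by
    calc (∑ a : Fin n, ∑ b : Fin n,
        (w G (i, j) (recon i j a b g) - d) * ∏ q' ∈ S, w G q' (recon i j a b g))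
        = ∑ a : Fin n, c * (if Gi a = 1 then (∑ b ∈ B, (χ a b - d)) else 0) :=
          Finset.sum_congr rfl (fun a _ => inner1 a)
      _ = c * ∑ a : Fin n, (if Gi a = 1 then (∑ b ∈ B, (χ a b - d)) else 0) :=
          (Finset.mul_sum _ _ _).symm
      _ = c * ∑ a ∈ A, ∑ b ∈ B, (χ a b - d) := by
          congr 1
          rw [hA, Finset.sum_filter]
      _ = c * ((∑ a ∈ A, ∑ b ∈ B, χ a b) - d * A.card * B.card) := by
          congr 1
          simp only [Finset.sum_sub_distrib, Finset.sum_const, nsmul_eq_mul]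
          ring
  set A' : Finset (Fin k × Fin n) := A.image (fun a => (i, a)) with hA'
  set B' : Finset (Fin k × Fin n) := B.image (fun b => (j, b)) with hB'
  have hinj1 : Function.Injective (fun a : Fin n => ((i, a) : Fin k × Fin n)) :=
    fun x y h => (Prod.ext_iff.1 h).2
  have hinj2 : Function.Injective (fun b : Fin n => ((j, b) : Fin k × Fin n)) :=
    fun x y h => (Prod.ext_iff.1 h).2
  have hcardA : A'.card = A.card := Finset.card_image_of_injective _ hinj1
  have hcardB : B'.card = B.card := Finset.card_image_of_injective _ hinj2
  have hAsub : A' ⊆ part k n i := by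
    intro v hv
    rw [hA', Finset.mem_image] at hv
    obtain ⟨a, _, rfl⟩ := hv
    exact mem_part.2 rfl
  have hBsub : B' ⊆ part k n j := by
    intro v hv
    rw [hB', Finset.mem_image] at hv
    obtain ⟨b, _, rfl⟩ := hv
    exact mem_part.2 rfl
  have hcards : ((A ×ˢ B).filter fun p => G.Adj (i, p.1) (j, p.2)).card
      = ((A' ×ˢ B').filter fun q => G.Adj q.1 q.2).card := by
    apply Finset.card_bij (fun p _ => ((i, p.1), (j, p.2)))
    · intro p hp
      rw [Finset.mem_filter, Finset.mem_product] at hp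
      rw [Finset.mem_filter, Finset.mem_product]
      exact ⟨⟨Finset.mem_image_of_mem _ hp.1.1, Finset.mem_image_of_mem _ hp.1.2⟩, hp.2⟩
    · intro p hp p' hp' h
      simp only [Prod.mk.injEq] at h
      exact Prod.ext h.1.2 h.2.2
    · intro q hq
      rw [Finset.mem_filter, Finset.mem_product] at hq
      obtain ⟨⟨hq1, hq2⟩, hadj⟩ := hq
      rw [hA', Finset.mem_image] at hq1
      rw [hB', Finset.mem_image] at hq2
      obtain ⟨a, ha, hqa⟩ := hq1
      obtain ⟨b, hb, hqb⟩ := hq2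
      refine ⟨(a, b), ?_, ?_⟩
      · rw [Finset.mem_filter, Finset.mem_product]
        refine ⟨⟨ha, hb⟩, ?_⟩
        rw [← hqa, ← hqb] at hadj
        exact hadj
      · exact Prod.ext hqa hqb
  have hEB : (∑ a ∈ A, ∑ b ∈ B, χ a b) = (eBetween G A' B' : ℝ) := by
    have h1 : (∑ a ∈ A, ∑ b ∈ B, χ a b)
        = ∑ p ∈ A ×ˢ B, (if G.Adj (i, p.1) (j, p.2) then (1 : ℝ) else 0) := by
      rw [Finset.sum_product]
    rw [h1, Finset.sum_boole]
    norm_cast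
  rw [hsum1, abs_mul]
  have hcabs : |c| ≤ 1 := by rcases hc01 with h | h <;> simp [h]
  have h2 : |(∑ a ∈ A, ∑ b ∈ B, χ a b) - d * A.card * B.card| ≤ ε * ((n : ℝ) * n) := by
    rw [hEB, (show ((A.card : ℝ)) = (A'.card : ℝ) by rw [hcardA]),
      (show ((B.card : ℝ)) = (B'.card : ℝ) by rw [hcardB])]
    have hcb := count_bound G hε hreg hAsub hBsub
    rw [part_card, part_card] at hcb
    exact hcb
  calc |c| * |(∑ a ∈ A, ∑ b ∈ B, χ a b) - d * A.card * B.card|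
      ≤ 1 * (ε * ((n : ℝ) * n)) := mul_le_mul hcabs h2 (abs_nonneg _) zero_le_one
    _ = ε * ((n : ℝ) * n) := one_mul _
end inner
section step
variable {k n : ℕ}

lemma step_bound (G : SimpleGraph (Fin k × Fin n)) {ε : ℝ} (hε : 0 < ε)
    {i j : Fin k} (hij : i < j)
    (hreg : RegularPair G ε (part k n i) (part k n j))
    (S : Finset (Fin k × Fin k)) (hS : ∀ q' ∈ S, q'.1 < q'.2) (hqS : (i, j) ∉ S) :
    |∑ f : Fin k → Fin n,
        (w G (i, j) f - dens G (part k n i) (part k n j)) * ∏ q' ∈ S, w G q' f|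
      ≤ ε * (n : ℝ) ^ k := by
  classical
  have hk2 : 2 ≤ k := by
    have h1 : (i : ℕ) < (j : ℕ) := hij
    have h2 : (j : ℕ) < k := j.2
    omega
  rcases Nat.eq_zero_or_pos n with rfl | hn
  · haveI : IsEmpty (Fin k → Fin 0) := ⟨fun f => (f i).elim0⟩
    rw [Finset.univ_eq_empty, Finset.sum_empty, abs_zero, Nat.cast_zero,
      zero_pow (by omega : k ≠ 0), mul_zero]
  set X : (Fin k → Fin n) → ℝ := fun f =>
    (w G (i, j) f - dens G (part k n i) (part k n j)) * ∏ q' ∈ S, w G q' f with hX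
  have hji : j ≠ i := (Fin.ne_of_lt hij).symm
  have hsum : ∑ f : Fin k → Fin n, X f
      = ∑ g : {l : Fin k // l ≠ i ∧ l ≠ j} → Fin n, ∑ a : Fin n, ∑ b : Fin n,
          X (recon i j a b g) := by
    rw [← Equiv.sum_comp (reconEquiv i j hji) X]
    rw [Fintype.sum_prod_type]
    apply Finset.sum_congr rfl
    intro g _
    rw [Fintype.sum_prod_type]
    rfl
  rw [show (∑ f : Fin k → Fin n,
        (w G (i, j) f - dens G (part k n i) (part k n j)) * ∏ q' ∈ S, w G q' f)
      = ∑ f : Fin k → Fin n, X f from rfl, hsum]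
  have hbound : ∀ g : {l : Fin k // l ≠ i ∧ l ≠ j} → Fin n,
      |∑ a : Fin n, ∑ b : Fin n, X (recon i j a b g)| ≤ ε * ((n : ℝ) * n) :=
    fun g => inner_bound G hε hij hreg hn S hS hqS g
  have hpow : ((n : ℝ) ^ (k - 2)) * ((n : ℝ) * n) = (n : ℝ) ^ k := by
    rw [show (n : ℝ) * (n : ℝ) = (n : ℝ) ^ 2 by ring, ← pow_add]
    congr 1
    omega
  calc |∑ g : {l : Fin k // l ≠ i ∧ l ≠ j} → Fin n, ∑ a : Fin n, ∑ b : Fin n,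
        X (recon i j a b g)|
      ≤ ∑ g : {l : Fin k // l ≠ i ∧ l ≠ j} → Fin n,
          |∑ a : Fin n, ∑ b : Fin n, X (recon i j a b g)| :=
        Finset.abs_sum_le_sum_abs _ _
    _ ≤ ∑ _g : {l : Fin k // l ≠ i ∧ l ≠ j} → Fin n, ε * ((n : ℝ) * n) :=
        Finset.sum_le_sum (fun g _ => hbound g)
    _ = (Fintype.card ({l : Fin k // l ≠ i ∧ l ≠ j} → Fin n) : ℝ) * (ε * ((n : ℝ) * n)) := by
        rw [Finset.sum_const, nsmul_eq_mul, Finset.card_univ]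
    _ = ε * (n : ℝ) ^ k := by
        rw [Fintype.card_fun, card_rest (Fin.ne_of_lt hij), Fintype.card_fin]
        push_cast
        rw [show ((n : ℝ) ^ (k - 2)) * (ε * ((n : ℝ) * n))
          = ε * (((n : ℝ) ^ (k - 2)) * ((n : ℝ) * n)) from by ring, hpow]
end step
section tele
variable {k n : ℕ}

noncomputable def Phi (G : SimpleGraph (Fin k × Fin n)) (E S : Finset (Fin k × Fin k)) : ℝ :=
  ∑ f : Fin k → Fin n, (∏ q ∈ S, w G q f) *
    ∏ q ∈ E \ S, dens G (part k n q.1) (part k n q.2)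

lemma telescope (G : SimpleGraph (Fin k × Fin n)) (E : Finset (Fin k × Fin k))
    (hE : ∀ q ∈ E, q.1 < q.2) {ε : ℝ} (hε : 0 < ε)
    (hreg : ∀ q ∈ E, RegularPair G ε (part k n q.1) (part k n q.2)) :
    ∀ S ⊆ E, |Phi G E S - Phi G E ∅| ≤ (S.card : ℝ) * (ε * (n : ℝ) ^ k) := by
  classical
  intro S
  induction S using Finset.induction_on with
  | empty => intro _; simp
  | insert q S0 hx ih =>
    intro hsub
    have hqE : q ∈ E := hsub (Finset.mem_insert_self _ _)
    have hS0E : S0 ⊆ E := fun x hx' => hsub (Finset.mem_insert_of_mem hx')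
    have hq2 : q.1 < q.2 := hE q hqE
    have key : |Phi G E (insert q S0) - Phi G E S0| ≤ ε * (n : ℝ) ^ k := by
      have hqmem : q ∈ E \ S0 := Finset.mem_sdiff.2 ⟨hqE, hx⟩
      have hEsplit : E \ S0 = insert q (E \ insert q S0) := by
        rw [Finset.sdiff_insert, Finset.insert_erase hqmem]
      have hqnot : q ∉ E \ insert q S0 := by simp
      have hdiff : Phi G E (insert q S0) - Phi G E S0
          = (∏ q' ∈ E \ insert q S0, dens G (part k n q'.1) (part k n q'.2)) *
            ∑ f : Fin k → Fin n,
              (w G q f - dens G (part k n q.1) (part k n q.2)) * ∏ q' ∈ S0, w G q' f := by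
        unfold Phi
        rw [hEsplit, Finset.prod_insert hqnot, ← Finset.sum_sub_distrib, Finset.mul_sum]
        apply Finset.sum_congr rfl
        intro f _
        rw [Finset.prod_insert hx]
        ring
      rw [hdiff, abs_mul]
      have h1 : |∏ q' ∈ E \ insert q S0, dens G (part k n q'.1) (part k n q'.2)| ≤ 1 := by
        rw [abs_of_nonneg (Finset.prod_nonneg fun x _ => dens_nonneg G _ _)]
        exact Finset.prod_le_one (fun x _ => dens_nonneg G _ _) (fun x _ => dens_le_one G _ _)
      have h2 : |∑ f : Fin k → Fin n,
          (w G q f - dens G (part k n q.1) (part k n q.2)) * ∏ q' ∈ S0, w G q' f|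
          ≤ ε * (n : ℝ) ^ k := by
        obtain ⟨i, j⟩ := q
        exact step_bound G hε hq2 (hreg _ hqE) S0 (fun x hx' => hE x (hS0E hx')) hx
      calc |∏ q' ∈ E \ insert q S0, dens G (part k n q'.1) (part k n q'.2)| *
            |∑ f : Fin k → Fin n,
              (w G q f - dens G (part k n q.1) (part k n q.2)) * ∏ q' ∈ S0, w G q' f|
          ≤ 1 * (ε * (n : ℝ) ^ k) := mul_le_mul h1 h2 (abs_nonneg _) zero_le_one
        _ = ε * (n : ℝ) ^ k := one_mul _
    calc |Phi G E (insert q S0) - Phi G E ∅|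
        ≤ |Phi G E (insert q S0) - Phi G E S0| + |Phi G E S0 - Phi G E ∅| :=
          abs_sub_le _ _ _
      _ ≤ ε * (n : ℝ) ^ k + (S0.card : ℝ) * (ε * (n : ℝ) ^ k) :=
          add_le_add key (ih hS0E)
      _ = ((insert q S0).card : ℝ) * (ε * (n : ℝ) ^ k) := by
          rw [Finset.card_insert_of_notMem hx]
          push_cast
          ring
end tele
section final
variable {k n : ℕ}

lemma Phi_full (H : SimpleGraph (Fin k)) (G : SimpleGraph (Fin k × Fin n)) :
    Phi G (Finset.univ.filter fun q : Fin k × Fin k => H.Adj q.1 q.2 ∧ q.1 < q.2)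
      (Finset.univ.filter fun q : Fin k × Fin k => H.Adj q.1 q.2 ∧ q.1 < q.2)
      = (canonCount H G : ℝ) := by
  classical
  set E := Finset.univ.filter fun q : Fin k × Fin k => H.Adj q.1 q.2 ∧ q.1 < q.2 with hEdef
  unfold Phi canonCount
  rw [Finset.sdiff_self]
  simp only [Finset.prod_empty, mul_one]
  have hf : ∀ f : Fin k → Fin n, (∏ q ∈ E, w G q f)
      = if (∀ i j, H.Adj i j → G.Adj (i, f i) (j, f j)) then (1 : ℝ) else 0 := by
    intro f
    unfold w
    rw [Finset.prod_boole]
    by_cases hA : ∀ i j, H.Adj i j → G.Adj (i, f i) (j, f j)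
    · rw [if_pos, if_pos hA]
      intro q hq
      rw [hEdef, Finset.mem_filter] at hq
      exact hA q.1 q.2 hq.2.1
    · rw [if_neg, if_neg hA]
      intro hall
      apply hA
      intro i j hadj
      rcases lt_trichotomy i j with h | h | h
      · exact hall (i, j) (by rw [hEdef, Finset.mem_filter]; exact ⟨Finset.mem_univ _, hadj, h⟩)
      · exact absurd h hadj.ne
      · exact (hall (j, i)
          (by rw [hEdef, Finset.mem_filter]; exact ⟨Finset.mem_univ _, hadj.symm, h⟩)).symm
  rw [Finset.sum_congr rfl (fun f _ => hf f), Finset.sum_boole]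

lemma Phi_empty (G : SimpleGraph (Fin k × Fin n)) (E : Finset (Fin k × Fin k)) :
    Phi G E ∅ = (∏ q ∈ E, dens G (part k n q.1) (part k n q.2)) * (n : ℝ) ^ k := by
  classical
  unfold Phi
  simp only [Finset.prod_empty, one_mul, Finset.sdiff_empty]
  rw [Finset.sum_const, nsmul_eq_mul, Finset.card_univ, Fintype.card_fun,
    Fintype.card_fin, Fintype.card_fin]
  push_cast
  ring
end final
theorem stmt13 (k : ℕ) (H : SimpleGraph (Fin k)) (δ : ℝ) (hδ : 0 < δ) :
    ∃ (ε : ℝ) (n₀ : ℕ), 0 < ε ∧ ∀ n : ℕ, n₀ ≤ n →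
      ∀ G : SimpleGraph (Fin k × Fin n),
        (∀ i j : Fin k, H.Adj i j → RegularPair G ε (part k n i) (part k n j)) →
        |(canonCount H G : ℝ) -
            (∏ q ∈ Finset.univ.filter
                (fun q : Fin k × Fin k => H.Adj q.1 q.2 ∧ q.1 < q.2),
              dens G (part k n q.1) (part k n q.2)) * (n : ℝ) ^ k| ≤
          δ * (n : ℝ) ^ k := by
  classical
  have hε : 0 < δ / ((k : ℝ) * k + 1) := by positivity
  refine ⟨δ / ((k : ℝ) * k + 1), 1, hε, ?_⟩
  intro n hn G hreg
  set E := Finset.univ.filter fun q : Fin k × Fin k => H.Adj q.1 q.2 ∧ q.1 < q.2 with hEdef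
  have hE1 : ∀ q ∈ E, q.1 < q.2 := fun q hq => (Finset.mem_filter.1 hq).2.2
  have hE2 : ∀ q ∈ E, RegularPair G (δ / ((k : ℝ) * k + 1))
      (part k n q.1) (part k n q.2) :=
    fun q hq => hreg q.1 q.2 (Finset.mem_filter.1 hq).2.1
  have htel := telescope G E hE1 hε hE2 E (Finset.Subset.refl E)
  have hcanon : Phi G E E = (canonCount H G : ℝ) := Phi_full H G
  have hempty := Phi_empty G E
  have hcard : (E.card : ℝ) ≤ (k : ℝ) * k := by
    have h1 : E.card ≤ k * k := by
      calc E.card ≤ (Finset.univ : Finset (Fin k × Fin k)).card := Finset.card_filter_le _ _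
        _ = k * k := by
            simp [Finset.card_univ]
    exact_mod_cast h1
  have ht : (0 : ℝ) ≤ (n : ℝ) ^ k := by positivity
  have hM : (0 : ℝ) < (k : ℝ) * k + 1 := by positivity
  have h5 : (E.card : ℝ) * (δ / ((k : ℝ) * k + 1)) ≤ δ := by
    have hrw : (E.card : ℝ) * (δ / ((k : ℝ) * k + 1))
        = (E.card : ℝ) * δ / ((k : ℝ) * k + 1) := by ring
    rw [hrw, div_le_iff₀ hM]
    nlinarith
  calc |(canonCount H G : ℝ) -
        (∏ q ∈ E, dens G (part k n q.1) (part k n q.2)) * (n : ℝ) ^ k|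
      = |Phi G E E - Phi G E ∅| := by rw [hcanon, hempty]
    _ ≤ (E.card : ℝ) * (δ / ((k : ℝ) * k + 1) * (n : ℝ) ^ k) := htel
    _ = ((E.card : ℝ) * (δ / ((k : ℝ) * k + 1))) * (n : ℝ) ^ k := by ring
    _ ≤ δ * (n : ℝ) ^ k := mul_le_mul_of_nonneg_right h5 ht
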